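/- In the flower-shaped knowledge graph with cyclically colored petals, any two candidate targets a_{2j−1}^{(i)} and a_{2j}^{(i)} within the same petal are not related by any automorphism of the graph fixing the query head s and query relation r_0, i.e., the links (s, r_0, a_{2j−1}^{(i)}) and (s, r_0, a_{2j}^{(i)}) are not isomorphic; yet there exists an automorphism (π, φ) of the graph with φ(r_1^{(i)}) = r_2^{(i)} for some petal i, so any model whose relation representations are invariant under automorphisms must assign equal representations to r_1^{(i)} and r_2^{(i)}. -/

import Mathlib

namespace Petals

/-- Vertices of the flower-shaped knowledge graph: the stem `b_0, …, b_t`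
(`b_0 = s` is the central node), and for each of the `c` petals, the nodes
`a_1, …, a_{2(l+1)+1}` (the petal length parameter being `l + 1 ≥ 1`). -/
abbrev PV (c t l : ℕ) := Fin (t + 1) ⊕ (Fin c × Fin (2 * l + 3))

/-- Relation types: `none` is `r₀` (the stem/query relation); `some i` is `r₁^{(i)}`,
and the cyclic assignment sets `r₂^{(i)} = r₁^{(i+1 mod c)} = some (finRotate c i)`. -/
abbrev PR (c : ℕ) := Option (Fin c)

/-- The edges of the flower-shaped knowledge graph with `c` petals of length `l + 1` and
a stem of length `t`: consecutive stem edges of type `r₀`; for each petal `i`, the two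
attachment edges `(s, r₁^{(i)}, a₁^{(i)})` and `(s, r₂^{(i)}, a₂^{(i)})`, the internal
edges `(a_p^{(i)}, r₁^{(i)}, a_{p+2}^{(i)})`, and the closing edge into the last node. -/
def petalsE (c t l : ℕ) : Set (PV c t l × PR c × PV c t l) :=
  {x | ∃ j : Fin t, x = (Sum.inl j.castSucc, none, Sum.inl j.succ)} ∪
  {x | ∃ i : Fin c, x = (Sum.inl 0, some i, Sum.inr (i, ⟨0, by omega⟩))} ∪
  {x | ∃ i : Fin c, x = (Sum.inl 0, some (finRotate c i), Sum.inr (i, ⟨1, by omega⟩))} ∪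
  {x | ∃ (i : Fin c) (p : ℕ) (hp : p + 2 ≤ 2 * l + 2),
      x = (Sum.inr (i, ⟨p, by omega⟩), some i, Sum.inr (i, ⟨p + 2, by omega⟩))} ∪
  {x | ∃ i : Fin c,
      x = (Sum.inr (i, ⟨2 * l + 1, by omega⟩), some i, Sum.inr (i, ⟨2 * l + 2, by omega⟩))}

/-- The node permutation rotating the petals (and fixing the stem pointwise). -/
def πrot (c t l : ℕ) : PV c t l ≃ PV c t l :=
  Equiv.sumCongr (Equiv.refl _) (Equiv.prodCongr (finRotate c) (Equiv.refl _))

/-- The relation permutation cyclically shifting the petal relation types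
(and fixing `r₀`). -/
def φrot (c : ℕ) : PR c ≃ PR c := Equiv.optionCongr (finRotate c)

/-- An automorphism of the flower-shaped knowledge graph. -/
def IsAuto (c t l : ℕ) (π : PV c t l ≃ PV c t l) (φ : PR c ≃ PR c) : Prop :=
  ∀ (h : PV c t l) (r : PR c) (t' : PV c t l),
    (h, r, t') ∈ petalsE c t l ↔ (π h, φ r, π t') ∈ petalsE c t l

lemma pres {c t l : ℕ} (e : Fin c ≃ Fin c)
    (he : ∀ i, e (finRotate c i) = finRotate c (e i))
    (h : PV c t l) (r : PR c) (t' : PV c t l) (hx : (h, r, t') ∈ petalsE c t l) :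
    ((Equiv.sumCongr (Equiv.refl (Fin (t+1)))
        (Equiv.prodCongr e (Equiv.refl (Fin (2*l+3))))) h,
     Equiv.optionCongr e r,
     (Equiv.sumCongr (Equiv.refl (Fin (t+1)))
        (Equiv.prodCongr e (Equiv.refl (Fin (2*l+3))))) t') ∈ petalsE c t l := by
  simp only [petalsE, Set.mem_union, Set.mem_setOf_eq, Prod.mk.injEq] at hx ⊢
  rcases hx with ((((⟨j, rfl, rfl, rfl⟩ | ⟨i, rfl, rfl, rfl⟩) | ⟨i, rfl, rfl, rfl⟩) |
      ⟨i, p, hp, rfl, rfl, rfl⟩) | ⟨i, rfl, rfl, rfl⟩)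
  · exact Or.inl (Or.inl (Or.inl (Or.inl ⟨j, by simp⟩)))
  · exact Or.inl (Or.inl (Or.inl (Or.inr ⟨e i, by simp⟩)))
  · exact Or.inl (Or.inl (Or.inr ⟨e i, by simp [he, -finRotate_apply]⟩))
  · exact Or.inl (Or.inr ⟨e i, p, hp, by simp⟩)
  · exact Or.inr ⟨e i, by simp⟩

lemma isAuto_of_comm {c t l : ℕ} (e : Fin c ≃ Fin c)
    (he : ∀ i, e (finRotate c i) = finRotate c (e i)) :
    IsAuto c t l (Equiv.sumCongr (Equiv.refl _) (Equiv.prodCongr e (Equiv.refl _)))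
      (Equiv.optionCongr e) := by
  have he' : ∀ i, e.symm (finRotate c i) = finRotate c (e.symm i) := by
    intro i
    apply e.injective
    rw [Equiv.apply_symm_apply, he (e.symm i), Equiv.apply_symm_apply]
  intro h r t'
  constructor
  · exact pres e he h r t'
  · intro hx
    have key : ∀ x : PV c t l,
        (Equiv.sumCongr (Equiv.refl (Fin (t+1)))
          (Equiv.prodCongr e.symm (Equiv.refl (Fin (2*l+3)))))
        ((Equiv.sumCongr (Equiv.refl (Fin (t+1)))
          (Equiv.prodCongr e (Equiv.refl (Fin (2*l+3))))) x) = x := by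
      rintro (x | ⟨a, b⟩) <;> simp
    have okey : ∀ r : PR c,
        Equiv.optionCongr e.symm (Equiv.optionCongr e r) = r := by
      intro r; exact (Equiv.optionCongr e).symm_apply_apply r
    have h2 := pres e.symm he' _ _ _ hx
    rw [key, key, okey] at h2
    exact h2

lemma isAuto_rot (c t l : ℕ) : IsAuto c t l (πrot c t l) (φrot c) :=
  isAuto_of_comm (finRotate c) (fun _ => rfl)

lemma rot_ne {c : ℕ} (hc : 2 ≤ c) (i : Fin c) : finRotate c i ≠ i := by
  obtain ⟨c, rfl⟩ : ∃ d, c = d + 1 := ⟨c - 1, by omega⟩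
  intro hEq
  have hv := congrArg Fin.val hEq
  rw [coe_finRotate] at hv
  split_ifs at hv with hl
  · have : i.val = c := by rw [hl]; rfl
    omega
  · omega



lemma in_edge {c t l : ℕ} {h' : PV c t l} {r : PR c} {i : Fin c} {p : ℕ}
    (hp : p ≤ 2 * l + 1) (hp3 : p < 2 * l + 3)
    (hmem : (h', r, (Sum.inr (i, ⟨p, hp3⟩) : PV c t l)) ∈ petalsE c t l) :
    (p = 0 ∧ h' = Sum.inl 0 ∧ r = some i) ∨
    (p = 1 ∧ h' = Sum.inl 0 ∧ r = some (finRotate c i)) ∨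
    (∃ hq : 2 ≤ p, h' = Sum.inr (i, ⟨p - 2, by omega⟩) ∧ r = some i) := by
  simp only [petalsE, Set.mem_union, Set.mem_setOf_eq, Prod.mk.injEq] at hmem
  rcases hmem with ((((⟨j, h1, h2, h3⟩ | ⟨i', h1, h2, h3⟩) | ⟨i', h1, h2, h3⟩) |
      ⟨i', q, hq, h1, h2, h3⟩) | ⟨i', h1, h2, h3⟩)
  · exact absurd h3 (by simp)
  · obtain ⟨rfl, h5⟩ : i = i' ∧ p = 0 := by simpa [Fin.ext_iff] using h3
    exact Or.inl ⟨h5, h1, h2⟩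
  · obtain ⟨rfl, h5⟩ : i = i' ∧ p = 1 := by simpa [Fin.ext_iff] using h3
    exact Or.inr (Or.inl ⟨h5, h1, h2⟩)
  · obtain ⟨rfl, h5⟩ : i = i' ∧ p = q + 2 := by simpa [Fin.ext_iff] using h3
    refine Or.inr (Or.inr ⟨by omega, ?_, h2⟩)
    rw [h1]
    simp only [Sum.inr.injEq, Prod.mk.injEq, Fin.ext_iff]
    exact ⟨trivial, by omega⟩
  · obtain ⟨rfl, h5⟩ : i = i' ∧ p = 2 * l + 2 := by simpa [Fin.ext_iff] using h3
    omega



lemma out_edge_a1 {c t l : ℕ} {r : PR c} {t' : PV c t l} {i : Fin c}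
    (hmem : ((Sum.inr (i, ⟨1, by omega⟩) : PV c t l), r, t') ∈ petalsE c t l) :
    r = some i := by
  simp only [petalsE, Set.mem_union, Set.mem_setOf_eq, Prod.mk.injEq] at hmem
  rcases hmem with ((((⟨j, h1, h2, h3⟩ | ⟨i', h1, h2, h3⟩) | ⟨i', h1, h2, h3⟩) |
      ⟨i', q, hq, h1, h2, h3⟩) | ⟨i', h1, h2, h3⟩)
  · exact absurd h1 (by simp)
  · exact absurd h1 (by simp)
  · exact absurd h1 (by simp)
  · obtain ⟨rfl, h5⟩ : i = i' ∧ (1 : ℕ) = q := by simpa [Fin.ext_iff] using h1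
    exact h2
  · obtain ⟨rfl, h5⟩ : i = i' ∧ (1 : ℕ) = 2 * l + 1 := by simpa [Fin.ext_iff] using h1
    exact h2

lemma mem_attach1 {c t l : ℕ} (i : Fin c) :
    ((Sum.inl 0 : PV c t l), some i, (Sum.inr (i, ⟨0, by omega⟩) : PV c t l)) ∈
      petalsE c t l :=
  Or.inl (Or.inl (Or.inl (Or.inr ⟨i, rfl⟩)))

lemma mem_internal {c t l : ℕ} (i : Fin c) (p : ℕ) (hp : p + 2 ≤ 2 * l + 2) :
    ((Sum.inr (i, ⟨p, by omega⟩) : PV c t l), some i,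
      (Sum.inr (i, ⟨p + 2, by omega⟩) : PV c t l)) ∈ petalsE c t l :=
  Or.inl (Or.inr ⟨i, p, hp, rfl⟩)

lemma no_swap {c t l : ℕ} (hc : 2 ≤ c) {π : PV c t l ≃ PV c t l} {φ : PR c ≃ PR c}
    (hA : IsAuto c t l π φ) (hs : π (Sum.inl 0) = Sum.inl 0) (i : Fin c) :
    ∀ k : ℕ, ∀ _hk : 2 * k + 1 ≤ 2 * l + 1,
      π (Sum.inr (i, ⟨2 * k, by omega⟩)) = Sum.inr (i, ⟨2 * k + 1, by omega⟩) → False := by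
  intro k
  induction k with
  | zero =>
    intro hk hπ
    -- the attachment edge s → a₀ maps into a₁, forcing φ (some i) = some (rot i)
    have e1 := (hA _ _ _).mp (mem_attach1 (t := t) (l := l) i)
    rw [hs, hπ] at e1
    have c1 := in_edge (by omega) (by omega) e1
    have hφ : φ (some i) = some (finRotate c i) := by
      rcases c1 with ⟨h0, _, _⟩ | ⟨_, _, hr⟩ | ⟨hq, _, _⟩
      · omega
      · exact hr
      · omega
    -- the internal edge a₀ → a₂ maps to an out-edge of a₁ with label some (rot i)
    have e2 := (hA _ _ _).mp (mem_internal (t := t) i 0 (by omega))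
    rw [hπ, hφ] at e2
    have := out_edge_a1 e2
    exact rot_ne hc i (by simpa using this)
  | succ k ih =>
    intro hk hπ
    have e2 := (hA _ _ _).mp (mem_internal (t := t) i (2 * k) (by omega))
    have hπ' : π (Sum.inr (i, ⟨2 * k + 2, by omega⟩)) =
        Sum.inr (i, ⟨2 * (k + 1) + 1, by omega⟩) := by
      convert hπ using 3
      exact Prod.ext rfl (Fin.ext (by show 2 * k + 2 = 2 * (k + 1); omega))
    rw [hπ'] at e2
    have c1 := in_edge (p := 2 * (k + 1) + 1) (by omega) (by omega) e2
    rcases c1 with ⟨h0, _, _⟩ | ⟨h1', _, _⟩ | ⟨hq, hpre, hφ⟩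
    · omega
    · omega
    · apply ih (by omega)
      refine hpre.trans ?_
      simp only [Sum.inr.injEq, Prod.mk.injEq, Fin.ext_iff]
      exact ⟨trivial, by omega⟩

/-- In the flower-shaped knowledge graph with cyclically colored petals:
(a) the two candidate targets `a_{2j−1}^{(i)}` and `a_{2j}^{(i)}` within the same petal
are not related by any automorphism fixing the query head `s` and the query relation
`r₀`, i.e. the links `(s, r₀, a_{2j−1}^{(i)})` and `(s, r₀, a_{2j}^{(i)})` are not
isomorphic; yet (b) there exists an automorphism `(π, φ)` of the graph with
`φ(r₁^{(i)}) = r₂^{(i)} ≠ r₁^{(i)}` for some petal `i`, so (c) any model whose relation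
representations are invariant under automorphisms must assign equal representations to
`r₁^{(i)}` and `r₂^{(i)}`. -/
theorem stmt_17 (c t l : ℕ) (hc : 2 ≤ c) :
    (∀ (i : Fin c) (j : ℕ), 1 ≤ j → ∀ hj : j ≤ l + 1,
      ¬ ∃ (π : PV c t l ≃ PV c t l) (φ : PR c ≃ PR c),
        IsAuto c t l π φ ∧ π (Sum.inl 0) = Sum.inl 0 ∧ φ none = none ∧
          π (Sum.inr (i, ⟨2 * j - 2, by omega⟩)) = Sum.inr (i, ⟨2 * j - 1, by omega⟩))
      ∧ (∃ (π : PV c t l ≃ PV c t l) (φ : PR c ≃ PR c), IsAuto c t l π φ ∧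
          ∃ i : Fin c, φ (some i) = some (finRotate c i) ∧ some (finRotate c i) ≠ some i)
      ∧ (∀ (X : Type) (rep : PR c → X),
          (∀ (π : PV c t l ≃ PV c t l) (φ : PR c ≃ PR c),
            IsAuto c t l π φ → ∀ r, rep (φ r) = rep r) →
          ∀ i : Fin c, rep (some i) = rep (some (finRotate c i))) := by
  refine ⟨?_, ?_, ?_⟩
  · rintro i j hj1 hj2 ⟨π, φ, hA, hs, hφ, hπ⟩
    have h1 : (Sum.inr (i, ⟨2 * (j - 1), by omega⟩) : PV c t l) =
        Sum.inr (i, ⟨2 * j - 2, by omega⟩) := by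
      simp only [Sum.inr.injEq, Prod.mk.injEq, Fin.ext_iff]
      exact ⟨trivial, by omega⟩
    have h2 : (Sum.inr (i, ⟨2 * j - 1, by omega⟩) : PV c t l) =
        Sum.inr (i, ⟨2 * (j - 1) + 1, by omega⟩) := by
      simp only [Sum.inr.injEq, Prod.mk.injEq, Fin.ext_iff]
      exact ⟨trivial, by omega⟩
    exact no_swap hc hA hs i (j - 1) (by omega) (by rw [h1, hπ, h2])
  · refine ⟨πrot c t l, φrot c, isAuto_rot c t l, ⟨0, by omega⟩, by simp [φrot], ?_⟩
    simp only [ne_eq, Option.some.injEq]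
    exact rot_ne hc _
  · intro X rep hinv i
    have := hinv _ _ (isAuto_rot c t l) (some i)
    simp only [φrot, Equiv.optionCongr_apply, Option.map_some] at this
    exact this.symm


end Petals
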